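/- Let U be an ultrafilter on ℕ and f : ℕ → ℕ. If f(U) = U, then there exists X ∈ U such that f(n) = n for all n ∈ X. -/

import Mathlib

/-- A function `f : ℕ → ℕ` is finite-to-one if every fiber is finite. -/
def FinToOne (f : ℕ → ℕ) : Prop := ∀ n : ℕ, (f ⁻¹' {n}).Finite

/-- An ultrafilter `U` on `ℕ` is Hausdorff if whenever two functions push it
forward to the same ultrafilter, they agree on a set in `U`. -/
def IsHausdorffUltra (U : Ultrafilter ℕ) : Prop :=
  ∀ f g : ℕ → ℕ, Ultrafilter.map f U = Ultrafilter.map g U →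
    ∃ X ∈ U, ∀ x ∈ X, f x = g x

/-- An ultrafilter `U` on `ℕ` is weakly Hausdorff if whenever two finite-to-one
functions push it forward to the same ultrafilter, they agree on a set in `U`. -/
def IsWeaklyHausdorffUltra (U : Ultrafilter ℕ) : Prop :=
  ∀ f g : ℕ → ℕ, FinToOne f → FinToOne g →
    Ultrafilter.map f U = Ultrafilter.map g U →
    ∃ X ∈ U, ∀ x ∈ X, f x = g x



open Finset in
lemma exists_low_indeg (f : ℕ → ℕ) (S : Finset ℕ) (hS : S.Nonempty) :
    ∃ v ∈ S, (S.filter (fun m => f m = v ∧ m ≠ v)).card ≤ 1 := by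
  by_contra hcon
  push_neg at hcon
  have hdisj : ∀ v ∈ S, ∀ w ∈ S, v ≠ w →
      Disjoint (S.filter (fun m => f m = v ∧ m ≠ v)) (S.filter (fun m => f m = w ∧ m ≠ w)) := by
    intro v _ w _ hvw
    refine Finset.disjoint_left.2 ?_
    intro m hm hm'
    simp only [Finset.mem_filter] at hm hm'
    exact hvw (hm.2.1 ▸ hm'.2.1)
  have hsub : S.biUnion (fun v => S.filter (fun m => f m = v ∧ m ≠ v)) ⊆ S := by
    intro m hm
    simp only [Finset.mem_biUnion, Finset.mem_filter] at hm
    obtain ⟨v, _, hm, _⟩ := hm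
    exact hm
  have hcard := Finset.card_biUnion hdisj
  have hle := Finset.card_le_card hsub
  rw [hcard] at hle
  have h2 : ∑ _v ∈ S, 2 ≤ ∑ v ∈ S, (S.filter (fun m => f m = v ∧ m ≠ v)).card :=
    Finset.sum_le_sum (fun v hv => hcon v hv)
  simp only [Finset.sum_const, smul_eq_mul] at h2
  have h3 := le_trans h2 hle
  have := hS.card_pos
  omega

lemma fin3_avoid : ∀ x y : Fin 3, ∃ a : Fin 3, a ≠ x ∧ a ≠ y := by decide

lemma three_coloring (f : ℕ → ℕ) (S : Finset ℕ) :
    ∃ c : ℕ → Fin 3, ∀ n ∈ S, f n ∈ S → f n ≠ n → c (f n) ≠ c n := by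
  induction S using Finset.strongInduction with
  | _ S ih =>
    rcases S.eq_empty_or_nonempty with rfl | hS
    · exact ⟨fun _ => 0, by simp⟩
    obtain ⟨v, hv, hPv⟩ := exists_low_indeg f S hS
    obtain ⟨c, hc⟩ := ih (S.erase v) (Finset.erase_ssubset hv)
    set P := S.filter (fun m => f m = v ∧ m ≠ v) with hP
    obtain ⟨y, hy⟩ : ∃ y : Fin 3, ∀ m ∈ P, c m = y := by
      rcases P.eq_empty_or_nonempty with hPe | ⟨m₀, hm₀⟩
      · exact ⟨0, by simp [hPe]⟩
      · exact ⟨c m₀, fun m hm => by rw [Finset.card_le_one.1 hPv m hm m₀ hm₀]⟩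
    obtain ⟨a, hax, hay⟩ := fin3_avoid (c (f v)) y
    refine ⟨Function.update c v a, ?_⟩
    intro n hn hfn hne
    by_cases hnv : n = v
    · subst hnv
      rw [Function.update_self, Function.update_of_ne hne]
      exact fun hh => hax hh.symm
    · by_cases hfv : f n = v
      · rw [hfv, Function.update_self, Function.update_of_ne hnv]
        have hnP : n ∈ P := Finset.mem_filter.2 ⟨hn, hfv, hnv⟩
        rw [hy n hnP]
        exact hay
      · rw [Function.update_of_ne hfv, Function.update_of_ne hnv]
        exact hc n (Finset.mem_erase.2 ⟨hnv, hn⟩) (Finset.mem_erase.2 ⟨hfv, hfn⟩) hne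

lemma exists_global_coloring (f : ℕ → ℕ) :
    ∃ c : ℕ → Fin 3, ∀ n, f n ≠ n → c (f n) ≠ c n := by
  let G : SimpleGraph ℕ :=
    { Adj := fun a b => a ≠ b ∧ (f a = b ∨ f b = a)
      symm := ⟨fun a b hab => ⟨hab.1.symm, hab.2.symm⟩⟩
      loopless := ⟨fun a ha => ha.1 rfl⟩ }
  have hfin : ∀ G' : G.Subgraph, G'.verts.Finite → G'.coe →g (⊤ : SimpleGraph (Fin 3)) := by
    intro G' hfin
    have hex := three_coloring f hfin.toFinset
    set c := hex.choose with hcdef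
    have hc := hex.choose_spec
    refine ⟨fun x => c x.1, ?_⟩
    rintro ⟨x, hx⟩ ⟨z, hz⟩ hadj
    have hG : G.Adj x z := G'.adj_sub hadj
    have hxS : x ∈ hfin.toFinset := hfin.mem_toFinset.2 hx
    have hzS : z ∈ hfin.toFinset := hfin.mem_toFinset.2 hz
    simp only [SimpleGraph.top_adj]
    rcases hG.2 with hxz | hzx
    · have := hc x hxS (hxz ▸ hzS) (hxz ▸ hG.1.symm)
      rw [hxz] at this
      exact fun hh => this hh.symm
    · have := hc z hzS (hzx ▸ hxS) (hzx ▸ hG.1)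
      rw [hzx] at this
      exact this
  obtain ⟨C⟩ := SimpleGraph.nonempty_hom_of_forall_finite_subgraph_hom hfin
  refine ⟨fun n => C n, ?_⟩
  intro n hn
  have : G.Adj n (f n) := ⟨hn.symm, Or.inl rfl⟩
  have := C.map_rel this
  simp only [SimpleGraph.top_adj] at this
  exact fun hh => this hh.symm

/-- If `f(U) = U` then `f` is the identity on a set in `U`. -/
theorem pushforward_eq_self_implies_id_on_set (U : Ultrafilter ℕ) (f : ℕ → ℕ)
    (h : Ultrafilter.map f U = U) :
    ∃ X ∈ U, ∀ n ∈ X, f n = n := by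
  obtain ⟨c, hc⟩ := exists_global_coloring f
  have hi : ∃ i : Fin 3, c ⁻¹' {i} ∈ U := by
    by_contra h'
    push_neg at h'
    have hcompl : ∀ i : Fin 3, (c ⁻¹' {i})ᶜ ∈ U := fun i =>
      Ultrafilter.compl_mem_iff_notMem.2 (h' i)
    have hmem : (c ⁻¹' {0})ᶜ ∩ ((c ⁻¹' {1})ᶜ ∩ (c ⁻¹' {2})ᶜ) ∈ U :=
      Filter.inter_mem (hcompl 0) (Filter.inter_mem (hcompl 1) (hcompl 2))
    obtain ⟨n, hn0, hn1, hn2⟩ := Ultrafilter.nonempty_of_mem hmem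
    have : ∀ x : Fin 3, x = 0 ∨ x = 1 ∨ x = 2 := by decide
    rcases this (c n) with hh | hh | hh
    · exact hn0 hh
    · exact hn1 hh
    · exact hn2 hh
  obtain ⟨i, hAi⟩ := hi
  have hpre : f ⁻¹' (c ⁻¹' {i}) ∈ U := by
    have : c ⁻¹' {i} ∈ Ultrafilter.map f U := by rw [h]; exact hAi
    exact Ultrafilter.mem_map.1 this
  refine ⟨c ⁻¹' {i} ∩ f ⁻¹' (c ⁻¹' {i}), Filter.inter_mem hAi hpre, ?_⟩
  rintro n ⟨hn1, hn2⟩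
  by_contra hne
  exact hc n hne (by simp only [Set.mem_preimage, Set.mem_singleton_iff] at hn1 hn2; rw [hn1, hn2])
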